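/- Let B, C, D ∈ ℝ and σ_φ, σ_θ > 0. Define σ̃² = σ_φ² / (1 + C² σ_φ² σ_θ²). Then the iterated integral of exp(i B δ + i (C δ + D) ε) with respect to the centered Gaussian measure of variance σ_θ² in ε and the centered Gaussian measure of variance σ_φ² in δ satisfies: ∫_ℝ ∫_ℝ exp(i B δ + i (C δ + D) ε) dN(0, σ_θ²)(ε) dN(0, σ_φ²)(δ) = (σ̃ / σ_φ) · exp( D² σ_θ² (C² σ_θ² σ̃² − 1) / 2 ) · exp( −i B C D σ_θ² σ̃² ) · exp( −B² σ̃² / 2 ). -/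

import Mathlib

open MeasureTheory ProbabilityTheory Real Complex
open scoped NNReal ENNReal

lemma gauss_integral_eq (σ : ℝ) (hσ : 0 < σ) (g : ℝ → ℂ) :
    ∫ x, g x ∂(gaussianReal 0 (Real.toNNReal (σ^2))) =
      ∫ x : ℝ, (gaussianPDFReal 0 (Real.toNNReal (σ^2)) x : ℂ) * g x := by
  have hv : Real.toNNReal (σ^2) ≠ 0 := by
    simp only [ne_eq, Real.toNNReal_eq_zero, not_le]
    positivity
  rw [gaussianReal_of_var_ne_zero 0 hv]
  have : (gaussianPDF 0 (Real.toNNReal (σ^2)))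
      = fun x => ((Real.toNNReal (gaussianPDFReal 0 (Real.toNNReal (σ^2)) x) : ℝ≥0) : ℝ≥0∞) := by
    rfl
  rw [this, integral_withDensity_eq_integral_smul
    ((measurable_gaussianPDFReal _ _).real_toNNReal) g]
  congr 1
  ext x
  rw [NNReal.smul_def, Real.coe_toNNReal _ (gaussianPDFReal_nonneg _ _ _), Complex.real_smul]

lemma gauss_quad (σ : ℝ) (hσ : 0 < σ) (b : ℝ) (hb : b ≤ 0) (c d : ℂ) :
    ∫ x : ℝ, Complex.exp ((b:ℂ) * x^2 + c * x + d) ∂(gaussianReal 0 (Real.toNNReal (σ^2)))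
    = (((Real.sqrt (2*π*σ^2))⁻¹ * Real.sqrt (π / (1/(2*σ^2) - b)) : ℝ) : ℂ)
      * Complex.exp (d - c^2 / (4 * (((b - 1/(2*σ^2)) : ℝ) : ℂ))) := by
  have hσ2 : (0:ℝ) < σ^2 := by positivity
  have hb' : (((b - 1/(2*σ^2) : ℝ)) : ℂ).re < 0 := by
    simp only [Complex.ofReal_re]
    have : (0:ℝ) < 1/(2*σ^2) := by positivity
    linarith
  rw [gauss_integral_eq σ hσ]
  have hcoe : ((Real.toNNReal (σ^2) : ℝ≥0) : ℝ) = σ^2 := Real.coe_toNNReal _ hσ2.le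
  have key : ∀ x : ℝ, (gaussianPDFReal 0 (Real.toNNReal (σ^2)) x : ℂ)
      * Complex.exp ((b:ℂ) * x^2 + c * x + d)
      = ((Real.sqrt (2*π*σ^2))⁻¹ : ℂ)
        * Complex.exp ((((b - 1/(2*σ^2) : ℝ)) : ℂ) * x^2 + c * x + d) := by
    intro x
    rw [gaussianPDFReal]
    push_cast [hcoe]
    rw [mul_assoc, ← Complex.exp_add]
    congr 2
    have : (σ:ℂ)^2 ≠ 0 := by
      simpa using (Complex.ofReal_ne_zero.2 hσ.ne')
    field_simp
    ring
  simp_rw [key]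
  rw [integral_const_mul, integral_cexp_quadratic hb' c d]
  have h1 : -(((b - 1/(2*σ^2) : ℝ)) : ℂ) = (((1/(2*σ^2) - b : ℝ)) : ℂ) := by push_cast; ring
  have h2 : (0:ℝ) < 1/(2*σ^2) - b := by
    have : (0:ℝ) < 1/(2*σ^2) := by positivity
    linarith
  have h3 : ((π : ℂ) / (((1/(2*σ^2) - b : ℝ)) : ℂ)) ^ (1/2 : ℂ)
      = ((Real.sqrt (π / (1/(2*σ^2) - b)) : ℝ) : ℂ) := by
    rw [show (π : ℂ) / (((1/(2*σ^2) - b : ℝ)) : ℂ) = (((π / (1/(2*σ^2) - b) : ℝ)) : ℂ) by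
      push_cast; ring]
    rw [show (1/2 : ℂ) = ((1/2 : ℝ) : ℂ) by norm_num]
    rw [← Complex.ofReal_cpow (by positivity), Real.sqrt_eq_rpow]
  rw [h1, h3]
  push_cast
  ring

lemma gauss_char (σ : ℝ) (hσ : 0 < σ) (t : ℝ) :
    ∫ x : ℝ, Complex.exp (Complex.I * ((t * x : ℝ) : ℂ)) ∂(gaussianReal 0 (Real.toNNReal (σ^2)))
    = Complex.exp (-((t^2 * σ^2 / 2 : ℝ) : ℂ)) := by
  have h0 : ∀ x : ℝ, Complex.exp (Complex.I * ((t * x : ℝ) : ℂ))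
      = Complex.exp (((0:ℝ):ℂ) * x^2 + (Complex.I * t) * x + 0) := by
    intro x; congr 1; push_cast; ring
  simp_rw [h0]
  rw [gauss_quad σ hσ 0 le_rfl (Complex.I * t) 0]
  have h1 : π / (1/(2*σ^2) - 0) = 2*π*σ^2 := by
    have : σ^2 ≠ 0 := by positivity
    field_simp
    ring
  rw [h1]
  have h2 : (√(2*π*σ^2))⁻¹ * √(2*π*σ^2) = 1 := by
    rw [inv_mul_cancel₀]
    positivity
  rw [h2]
  have hσC : ((σ:ℂ))^2 ≠ 0 := by
    simpa using (Complex.ofReal_ne_zero.2 hσ.ne')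
  push_cast
  rw [one_mul]
  congr 1
  field_simp
  linear_combination (norm := skip) (4 * (t:ℂ)^2 * (σ:ℂ)^2) * Complex.I_sq
  ring_nf
  simp only [inv_inv]
  ring


/-- Exact evaluation of the double Gaussian integral
`∫∫ exp(i B δ + i (C δ + D) ε) dN(0, σθ²)(ε) dN(0, σφ²)(δ)` underlying the closed-form
approximate spatial correlation matrix of a UPA under the Gaussian local scattering model,
where `σ̃` is the positive square root of `σφ² / (1 + C² σφ² σθ²)`. -/
theorem stmt11 (B C D σφ σθ : ℝ) (hφ : 0 < σφ) (hθ : 0 < σθ)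
    (σt : ℝ) (hσt_pos : 0 < σt)
    (hσt : σt ^ 2 = σφ ^ 2 / (1 + C ^ 2 * σφ ^ 2 * σθ ^ 2)) :
    (∫ δ : ℝ, (∫ ε : ℝ,
        Complex.exp (Complex.I * ((B * δ : ℝ) : ℂ) + Complex.I * (((C * δ + D) * ε : ℝ) : ℂ))
          ∂(gaussianReal 0 (Real.toNNReal (σθ ^ 2))))
      ∂(gaussianReal 0 (Real.toNNReal (σφ ^ 2))))
    = ((σt / σφ : ℝ) : ℂ)
      * Complex.exp (((D ^ 2 * σθ ^ 2 * (C ^ 2 * σθ ^ 2 * σt ^ 2 - 1) / 2 : ℝ) : ℂ))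
      * Complex.exp (-Complex.I * ((B * C * D * σθ ^ 2 * σt ^ 2 : ℝ) : ℂ))
      * Complex.exp (-((B ^ 2 * σt ^ 2 / 2 : ℝ) : ℂ)) := by
  have hden : (0:ℝ) < 1 + C ^ 2 * σφ ^ 2 * σθ ^ 2 := by positivity
  have hinner : ∀ δ : ℝ, (∫ ε : ℝ,
        Complex.exp (Complex.I * ((B * δ : ℝ) : ℂ) + Complex.I * (((C * δ + D) * ε : ℝ) : ℂ))
          ∂(gaussianReal 0 (Real.toNNReal (σθ ^ 2))))
      = Complex.exp ((((-(C^2*σθ^2/2)) : ℝ) : ℂ) * (δ:ℂ)^2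
          + (Complex.I * B - ((C*D*σθ^2 : ℝ) : ℂ)) * δ + (-((D^2*σθ^2/2 : ℝ) : ℂ))) := by
    intro δ
    simp_rw [Complex.exp_add, integral_const_mul, gauss_char σθ hθ (C*δ+D), ← Complex.exp_add]
    congr 1
    push_cast
    ring
  simp_rw [hinner]
  rw [gauss_quad σφ hφ (-(C^2*σθ^2/2)) (neg_nonpos.mpr (by positivity)) _ _]
  have hpre : (√(2*π*σφ^2))⁻¹ * √(π / (1/(2*σφ^2) - -(C^2*σθ^2/2))) = σt / σφ := by
    rw [show π / (1/(2*σφ^2) - -(C^2*σθ^2/2)) = 2*π*σt^2 by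
      rw [hσt]; field_simp; rw [sub_neg_eq_add, div_self (by positivity)]]
    rw [show 2*π*σt^2 = (2*π)*σt^2 by ring, show 2*π*σφ^2 = (2*π)*σφ^2 by ring,
        Real.sqrt_mul (by positivity) (σt^2), Real.sqrt_mul (by positivity) (σφ^2),
        Real.sqrt_sq hσt_pos.le, Real.sqrt_sq hφ.le]
    have h2π : √(2*π) ≠ 0 := by positivity
    field_simp
  rw [hpre]
  have hb2 : -(C^2*σθ^2/2) - 1/(2*σφ^2) = -(1/(2*σt^2)) := by
    rw [hσt]; field_simp; ring
  rw [hb2]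
  simp only [mul_assoc, ← Complex.exp_add]
  congr 2
  have hσtC : ((σt:ℂ))^2 ≠ 0 := by
    simpa using (Complex.ofReal_ne_zero.2 hσt_pos.ne')
  push_cast
  field_simp
  linear_combination (4 * (B:ℂ)^2 * (σt:ℂ)^2) * Complex.I_sq
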